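/- For a coherent state ω on a polarized C*-algebra (A, P̄), the subspace π_ω(P)v_ω = {π_ω(a*)v_ω : a ∈ P̄} is dense in the GNS Hilbert space H_ω, provided (A, P̄) admits norm normal ordering. -/
import Mathlib


set_option linter.unusedSectionVars false

open scoped ComplexOrder InnerProductSpace

variable {A : Type*} [NormedRing A] [StarRing A] [CStarRing A] [NormedAlgebra ℂ A]
  [StarModule ℂ A] [CompleteSpace A]

/-- A state on a unital C*-algebra: a positive linear functional of norm one
(equivalently, taking the value 1 at the unit). -/
def IsState (ω : A →ₗ[ℂ] ℂ) : Prop :=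
  ω 1 = 1 ∧ ∀ x : A, 0 ≤ ω (star x * x)

/-- A polarization of a unital C*-algebra `A`: a closed commutative unital Banach
subalgebra `P` generating `A` (as a C*-algebra) with `P ∩ P* = ℂ·1`. -/
def IsPolarization (P : Subalgebra ℂ A) : Prop :=
  IsClosed (P : Set A) ∧
  (∀ a ∈ P, ∀ b ∈ P, a * b = b * a) ∧
  (Algebra.adjoin ℂ ((P : Set A) ∪ star (P : Set A))).topologicalClosure = ⊤ ∧
  (∀ x ∈ P, star x ∈ P → ∃ c : ℂ, x = algebraMap ℂ A c)

/-- A coherent state on the polarized C*-algebra `(A, P)`. -/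
def IsCoherentState (P : Subalgebra ℂ A) (ω : A →ₗ[ℂ] ℂ) : Prop :=
  IsState ω ∧ ∀ x : A, ∀ a ∈ P, ω (x * a) = ω x * ω a

/-- The polarized C*-algebra `(A, P)` admits norm normal ordering: finite sums
`∑ bₖ* aₖ` with `aₖ, bₖ ∈ P` are norm-dense in `A`. -/
def AdmitsNormalOrdering (P : Subalgebra ℂ A) : Prop :=
  Dense {x : A | ∃ (n : ℕ) (a b : Fin n → A), (∀ i, a i ∈ P ∧ b i ∈ P) ∧
    x = ∑ i, star (b i) * a i}

/-- `(π, H, v)` is a GNS triple for the state `ω`. -/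
def IsGNS {H : Type*} [NormedAddCommGroup H] [InnerProductSpace ℂ H] [CompleteSpace H]
    (ω : A →ₗ[ℂ] ℂ) (π : A →⋆ₐ[ℂ] (H →L[ℂ] H)) (v : H) : Prop :=
  ‖v‖ = 1 ∧ (∀ x : A, ω x = ⟪v, π x v⟫_ℂ) ∧
    Dense (Set.range fun x : A => π x v)

/-- For a coherent state `ω` on a polarized C*-algebra with norm normal
ordering, the subspace `π_ω(P) v_ω = {π_ω(a*) v_ω : a ∈ P̄}` is dense in the GNS
Hilbert space. -/
theorem stmt_10 {H : Type*} [NormedAddCommGroup H] [InnerProductSpace ℂ H] [CompleteSpace H]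
    (P : Subalgebra ℂ A) (hP : IsPolarization P) (hno : AdmitsNormalOrdering P)
    (ω : A →ₗ[ℂ] ℂ) (hω : IsCoherentState P ω)
    (π : A →⋆ₐ[ℂ] (H →L[ℂ] H)) (v : H) (hGNS : IsGNS ω π v) :
    Dense {w : H | ∃ a ∈ P, w = π (star a) v} := by
  classical
  letI : CStarAlgebra A :=
    { ‹NormedRing A›, ‹StarRing A›, ‹CompleteSpace A›, ‹CStarRing A›,
      ‹NormedAlgebra ℂ A›, ‹StarModule ℂ A› with }
  obtain ⟨_, hcoh⟩ := hω
  obtain ⟨hv, hωeq, hdense⟩ := hGNS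
  set S : Set H := {w : H | ∃ a ∈ P, w = π (star a) v} with hS
  -- ω is star-preserving (via the GNS representation)
  have hstar : ∀ x : A, ω (star x) = starRingEnd ℂ (ω x) := by
    intro x
    rw [hωeq, hωeq, map_star, ContinuousLinearMap.star_eq_adjoint,
      ContinuousLinearMap.adjoint_inner_right, ← inner_conj_symm]
  have hadj : ∀ (x : A) (w : H), ⟪π x v, w⟫_ℂ = ⟪v, π (star x) w⟫_ℂ := by
    intro x w
    rw [map_star, ContinuousLinearMap.star_eq_adjoint,
      ContinuousLinearMap.adjoint_inner_right]
  have hvv : ⟪v, v⟫_ℂ = 1 := by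
    rw [inner_self_eq_norm_sq_to_K, hv]; norm_num
  -- key: vectors of P act on v as scalars
  have key : ∀ a ∈ P, π a v = ω a • v := by
    intro a ha
    have h1 : ⟪π a v, π a v⟫_ℂ = starRingEnd ℂ (ω a) * ω a := by
      rw [hadj, show (π (star a)) ((π a) v) = π (star a * a) v by rw [map_mul]; rfl,
        ← hωeq, hcoh (star a) a ha, hstar]
    have h2 : ⟪π a v, v⟫_ℂ = starRingEnd ℂ (ω a) := by
      rw [← inner_conj_symm, ← hωeq]
    have h0 : ⟪π a v - ω a • v, π a v - ω a • v⟫_ℂ = 0 := by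
      simp only [inner_sub_left, inner_sub_right, inner_smul_left, inner_smul_right,
        h1, h2, ← hωeq, hvv]
      ring
    have := inner_self_eq_zero.mp h0
    linear_combination (norm := module) this
  -- normal-ordered elements act on v landing in S
  have hD : ∀ x ∈ {x : A | ∃ (n : ℕ) (a b : Fin n → A), (∀ i, a i ∈ P ∧ b i ∈ P) ∧
      x = ∑ i, star (b i) * a i}, π x v ∈ S := by
    rintro x ⟨n, a, b, hab, rfl⟩
    refine ⟨∑ i, starRingEnd ℂ (ω (a i)) • b i, ?_, ?_⟩
    · exact Subalgebra.sum_mem P fun i _ => Subalgebra.smul_mem P (hab i).2 _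
    · rw [map_sum, star_sum, map_sum]
      simp only [ContinuousLinearMap.coe_sum', Finset.sum_apply]
      refine Finset.sum_congr rfl fun i _ => ?_
      rw [map_mul, ContinuousLinearMap.mul_apply, key (a i) (hab i).1, star_smul]
      simp
  -- continuity of x ↦ π x v
  have hf : Continuous fun y : A => π y v := by
    open scoped CStarAlgebra in
    exact (ContinuousLinearMap.apply ℂ H v).continuous.comp (map_continuous π)
  have hsub : (Set.range fun x : A => π x v) ⊆ closure S := by
    rintro _ ⟨x, rfl⟩
    show (fun y : A => π y v) x ∈ closure S
    exact map_mem_closure (f := fun y : A => π y v) hf (hno x) hD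
  exact (hdense.mono hsub).of_closure
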